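/- Let F : ℂ^n → ℝ^n be the Harvey–Lawson map F₁(z) = Im(∏ zᵢ), Fₖ(z) = |z₁|² − |zₖ|² (k ≥ 2). Then the critical set of F equals the union over 1 ≤ i < j ≤ n of the sets P_{ij} = { z ∈ ℂ^n : zᵢ = zⱼ = 0 }. -/

import Mathlib

open Complex Finset ContinuousLinearMap

noncomputable def sqLin (a : ℂ) : ℂ →L[ℝ] ℝ :=
  (2 * a.re) • Complex.reCLM + (2 * a.im) • Complex.imCLM

lemma sqLin_apply (a u : ℂ) : sqLin a u = 2 * ((starRingEnd ℂ) a * u).re := by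
  simp [sqLin, Complex.mul_re]; ring

lemma hasFDerivAt_normSq' (a : ℂ) : HasFDerivAt Complex.normSq (sqLin a) a := by
  have h : HasFDerivAt (fun z : ℂ => z.re * z.re + z.im * z.im) (sqLin a) a := by
    have hre := Complex.reCLM.hasFDerivAt (x := a)
    have him := Complex.imCLM.hasFDerivAt (x := a)
    have h2 := (hre.mul hre).add (him.mul him)
    refine HasFDerivAt.congr_fderiv h2 ?_
    ext w
    simp [sqLin]
    ring
  have : Complex.normSq = fun z : ℂ => z.re * z.re + z.im * z.im := by
    funext z; exact Complex.normSq_apply z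
  rw [this]; exact h

noncomputable def row0 {n : ℕ} (z : Fin (n+1) → ℂ) : (Fin (n+1) → ℂ) →L[ℝ] ℝ :=
  Complex.imCLM.comp (∑ i, (∏ j ∈ univ.erase i, z j) • (proj i : (Fin (n+1) → ℂ) →L[ℝ] ℂ))

noncomputable def rowK {n : ℕ} (z : Fin (n+1) → ℂ) (k : Fin (n+1)) : (Fin (n+1) → ℂ) →L[ℝ] ℝ :=
  (sqLin (z 0)).comp (proj 0) - (sqLin (z k)).comp (proj k)

noncomputable def Dmap {n : ℕ} (z : Fin (n+1) → ℂ) : (Fin (n+1) → ℂ) →L[ℝ] (Fin (n+1) → ℝ) :=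
  pi (fun k => if k = 0 then row0 z else rowK z k)

lemma row0_apply {n : ℕ} (z w : Fin (n+1) → ℂ) :
    row0 z w = (∑ i, (∏ j ∈ univ.erase i, z j) * w i).im := by
  simp [row0]

lemma rowK_apply {n : ℕ} (z w : Fin (n+1) → ℂ) (k : Fin (n+1)) :
    rowK z k w = 2 * ((starRingEnd ℂ) (z 0) * w 0).re - 2 * ((starRingEnd ℂ) (z k) * w k).re := by
  simp [rowK, sqLin_apply]

lemma Dmap_apply0 {n : ℕ} (z w : Fin (n+1) → ℂ) :
    Dmap z w 0 = (∑ i, (∏ j ∈ univ.erase i, z j) * w i).im := by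
  simp [Dmap, row0_apply]

lemma Dmap_applyK {n : ℕ} (z w : Fin (n+1) → ℂ) (k : Fin (n+1)) (hk : k ≠ 0) :
    Dmap z w k = 2 * ((starRingEnd ℂ) (z 0) * w 0).re - 2 * ((starRingEnd ℂ) (z k) * w k).re := by
  simp [Dmap, hk, rowK_apply]

lemma hasFDerivAt_F {n : ℕ} (F : (Fin (n + 1) → ℂ) → (Fin (n + 1) → ℝ))
    (hF0 : ∀ z, F z 0 = (∏ i, z i).im)
    (hFk : ∀ z, ∀ k : Fin (n + 1), k ≠ 0 →
      F z k = Complex.normSq (z 0) - Complex.normSq (z k))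
    (z : Fin (n+1) → ℂ) : HasFDerivAt F (Dmap z) z := by
  apply hasFDerivAt_pi''
  intro k
  rcases eq_or_ne k 0 with rfl | hk
  · have h1 : HasFDerivAt (fun x : Fin (n+1) → ℂ => ∏ i, x i)
        (∑ i, (∏ j ∈ univ.erase i, z j) • (proj i : (Fin (n+1) → ℂ) →L[ℝ] ℂ)) z :=
      hasFDerivAt_finset_prod (𝕜 := ℝ)
    have h2 := (Complex.imCLM.hasFDerivAt).comp z h1
    have he : (fun x : Fin (n+1) → ℂ => F x 0) = fun x => (∏ i, x i).im := by
      funext x; exact hF0 x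
    rw [he]
    convert h2 using 1
    · rfl
    · ext w
      simp [Dmap, row0]
  · have h1 := (hasFDerivAt_normSq' (z 0)).comp z (hasFDerivAt_apply (𝕜 := ℝ) 0 z)
    have h2 := (hasFDerivAt_normSq' (z k)).comp z (hasFDerivAt_apply (𝕜 := ℝ) k z)
    have h3 := h1.sub h2
    have he : (fun x : Fin (n+1) → ℂ => F x k)
        = fun x => Complex.normSq (x 0) - Complex.normSq (x k) := by
      funext x; exact hFk x k hk
    rw [he]
    convert h3 using 1
    ext w
    simp [Dmap, rowK, hk]
    ext w
    simp [Dmap, rowK, hk]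

lemma conj_mul_unit (a : ℂ) (ha : a ≠ 0) (q : ℂ) :
    (starRingEnd ℂ) a * (q * a / Complex.normSq a) = q := by
  have h1 : ((Complex.normSq a : ℂ)) ≠ 0 :=
    Complex.ofReal_ne_zero.mpr fun hh => ha (Complex.normSq_eq_zero.mp hh)
  have h2 : (starRingEnd ℂ) a * a = (Complex.normSq a : ℂ) := by
    rw [mul_comm]; exact Complex.mul_conj a
  field_simp
  rw [mul_right_comm, h2, mul_comm]

lemma surj_one_zero {n : ℕ} (z : Fin (n+1) → ℂ) (k : Fin (n+1)) (hzk : z k = 0)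
    (h : ∀ i, i ≠ k → z i ≠ 0) : Function.Surjective (Dmap z) := by
  intro t
  set Pk : ℂ := ∏ j ∈ univ.erase k, z j with hPk
  have hPkne : Pk ≠ 0 := by
    rw [hPk]
    exact Finset.prod_ne_zero_iff.mpr fun j hj => h j (Finset.ne_of_mem_erase hj)
  set c : Fin (n+1) → ℝ := fun i =>
    (if k = 0 then 0 else t k / 2) - (if i = 0 then 0 else t i / 2) with hc
  set w : Fin (n+1) → ℂ := fun i =>
    if i = k then (t 0 : ℂ) * Complex.I * (starRingEnd ℂ) Pk / Complex.normSq Pk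
    else (c i : ℂ) * z i / Complex.normSq (z i) with hw
  have hck : c k = 0 := by
    rcases eq_or_ne k 0 with rfl | h0
    · simp [hc]
    · simp [hc, h0]
  have hconj : ∀ i, (starRingEnd ℂ) (z i) * w i = (c i : ℂ) := by
    intro i
    rcases eq_or_ne i k with rfl | hik
    · simp [hw, hzk, hck]
    · simp only [hw, if_neg hik]
      exact conj_mul_unit (z i) (h i hik) _
  refine ⟨w, ?_⟩
  funext l
  rcases eq_or_ne l 0 with rfl | hl
  · rw [Dmap_apply0]
    have hterm : ∀ i ∈ (univ : Finset (Fin (n+1))), i ≠ k →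
        (∏ j ∈ univ.erase i, z j) * w i = 0 := by
      intro i _ hik
      have : (∏ j ∈ univ.erase i, z j) = 0 :=
        Finset.prod_eq_zero (Finset.mem_erase.mpr ⟨fun hh => hik hh.symm, mem_univ k⟩) hzk
      rw [this, zero_mul]
    rw [Finset.sum_eq_single k hterm (by simp)]
    have h1 : ((Complex.normSq Pk : ℂ)) ≠ 0 :=
      Complex.ofReal_ne_zero.mpr fun hh => hPkne (Complex.normSq_eq_zero.mp hh)
    have : Pk * w k = (t 0 : ℂ) * Complex.I := by
      simp only [hw, if_pos rfl]
      rw [mul_div_assoc, mul_comm Pk, mul_assoc, mul_assoc]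
      rw [div_mul_eq_mul_div, mul_comm ((starRingEnd ℂ) Pk) Pk, Complex.mul_conj,
        div_self h1, mul_one]
    rw [← hPk, this]
    simp
  · rw [Dmap_applyK z w l hl, hconj, hconj]
    simp only [Complex.ofReal_re]
    have e0 : c 0 = (if k = 0 then 0 else t k / 2) := by simp [hc]
    have el : c l = (if k = 0 then 0 else t k / 2) - t l / 2 := by simp [hc, hl]
    rw [e0, el]; ring

lemma im_aux (q r m : ℝ) (P : ℂ) :
    (((q : ℂ) + r * Complex.I) * P / (m : ℂ)).im = (q * P.im + r * P.re) / m := by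
  rcases eq_or_ne m 0 with rfl | hm
  · simp
  · rw [Complex.div_im]
    simp [Complex.normSq_ofReal, Complex.mul_im, Complex.mul_re]
    field_simp

lemma surj_no_zero {n : ℕ} (z : Fin (n+1) → ℂ) (h : ∀ i, z i ≠ 0) :
    Function.Surjective (Dmap z) := by
  intro t
  set P : ℂ := ∏ i, z i with hP
  have hPne : P ≠ 0 := Finset.prod_ne_zero_iff.mpr fun i _ => h i
  set ns : Fin (n+1) → ℝ := fun i => Complex.normSq (z i) with hns
  have hnspos : ∀ i, 0 < ns i := fun i => Complex.normSq_pos.mpr (h i)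
  set e : Fin (n+1) → ℝ := fun i => if i = 0 then 0 else t i / 2 with he
  set T : ℝ := ∑ i, 1 / ns i with hT
  have hTpos : 0 < T :=
    Finset.sum_pos (fun i _ => one_div_pos.mpr (hnspos i)) ⟨0, mem_univ 0⟩
  set U : ℝ := ∑ i, e i / ns i with hU
  set α : ℝ := P.im * T with hα
  set β : ℝ := P.re / ns 0 with hβ
  have hS : α ^ 2 + β ^ 2 ≠ 0 := by
    have : P.re ≠ 0 ∨ P.im ≠ 0 := by
      by_contra hcon
      push_neg at hcon
      exact hPne (Complex.ext hcon.1 hcon.2)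
    rcases this with hre | him
    · have : β ≠ 0 := div_ne_zero hre (hnspos 0).ne'
      positivity
    · have : α ≠ 0 := mul_ne_zero him hTpos.ne'
      positivity
  set R : ℝ := t 0 + P.im * U with hR
  set s : ℝ := α * R / (α ^ 2 + β ^ 2) with hs
  set d0 : ℝ := β * R / (α ^ 2 + β ^ 2) with hd0
  set c : Fin (n+1) → ℝ := fun i => s - e i with hc
  set d : Fin (n+1) → ℝ := fun i => if i = 0 then d0 else 0 with hd
  set w : Fin (n+1) → ℂ := fun i => ((c i : ℂ) + (d i : ℂ) * Complex.I) * z i / ns i with hw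
  have hconj : ∀ i, (starRingEnd ℂ) (z i) * w i = (c i : ℂ) + (d i : ℂ) * Complex.I :=
    fun i => conj_mul_unit (z i) (h i) _
  refine ⟨w, ?_⟩
  funext l
  rcases eq_or_ne l 0 with rfl | hl
  · rw [Dmap_apply0]
    have hterm : ∀ i, (∏ j ∈ univ.erase i, z j) * w i
        = ((c i : ℂ) + (d i : ℂ) * Complex.I) * P / (ns i : ℂ) := by
      intro i
      have hPz : (∏ j ∈ univ.erase i, z j) * z i = P := by
        rw [hP, mul_comm]
        exact Finset.mul_prod_erase univ z (mem_univ i)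
      rw [hw]
      simp only
      rw [← hPz]
      ring
    have him : (∑ i, (∏ j ∈ univ.erase i, z j) * w i).im
        = ∑ i, (c i * P.im + d i * P.re) / ns i := by
      rw [Complex.im_sum]
      exact Finset.sum_congr rfl fun i _ => by rw [hterm i, im_aux]
    rw [him]
    have hsplit : ∑ i, (c i * P.im + d i * P.re) / ns i
        = (s * α - P.im * U) + d0 * β := by
      have h1 : ∀ i, (c i * P.im + d i * P.re) / ns i
          = (s * P.im) * (1 / ns i) - P.im * (e i / ns i) + (d i * P.re) / ns i := by
        intro i
        rw [hc]
        simp only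
        field_simp
      rw [Finset.sum_congr rfl fun i _ => h1 i]
      rw [Finset.sum_add_distrib, Finset.sum_sub_distrib, ← Finset.mul_sum, ← Finset.mul_sum,
        ← hT, ← hU]
      have h2 : ∑ i, (d i * P.re) / ns i = d0 * β := by
        rw [Finset.sum_eq_single_of_mem 0 (mem_univ 0) (fun i _ hi => by simp [hd, hi])]
        have hd00 : d 0 = d0 := by simp [hd]
        rw [hd00, hβ]
        ring
      rw [h2, hα]
      ring
    rw [hsplit]
    have key : s * α + d0 * β = R := by
      rw [hs, hd0]
      field_simp
    have hns0 : (0:ℝ) < ns 0 := hnspos 0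
    linarith [key]
  · rw [Dmap_applyK z w l hl, hconj, hconj]
    have hre : ∀ i, ((c i : ℂ) + (d i : ℂ) * Complex.I).re = c i := by
      intro i; simp
    rw [hre, hre, hc]
    simp only
    rw [he]
    simp [hl]
    ring

/-- The critical set of the Harvey–Lawson map `F : ℂⁿ → ℝⁿ`,
`F₁(z) = Im(∏ zᵢ)`, `Fₖ(z) = |z₁|² − |zₖ|²` (k ≥ 2), i.e. the set of points
where the differential of `F` is not surjective, equals the union over all
pairs `i < j` of the sets `P_{ij} = { z : zᵢ = zⱼ = 0 }`. -/
theorem statement1 (n : ℕ) (F : (Fin (n + 1) → ℂ) → (Fin (n + 1) → ℝ))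
    (hF0 : ∀ z, F z 0 = (∏ i, z i).im)
    (hFk : ∀ z, ∀ k : Fin (n + 1), k ≠ 0 →
      F z k = Complex.normSq (z 0) - Complex.normSq (z k)) :
    {z | ¬ Function.Surjective (fderiv ℝ F z)} =
      ⋃ (i : Fin (n + 1)) (j : Fin (n + 1)) (_ : i < j),
        {z | z i = 0 ∧ z j = 0} := by
  ext z
  simp only [Set.mem_setOf_eq, Set.mem_iUnion]
  have hD : fderiv ℝ F z = Dmap z := (hasFDerivAt_F F hF0 hFk z).fderiv
  rw [hD]
  constructor
  · intro hns
    by_contra hcon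
    push_neg at hcon
    apply hns
    by_cases hz : ∀ i, z i ≠ 0
    · exact surj_no_zero z hz
    · push_neg at hz
      obtain ⟨k, hk⟩ := hz
      apply surj_one_zero z k hk
      intro i hik
      by_contra hzi0
      rcases lt_or_gt_of_ne hik with hlt | hgt
      · exact hcon i k hlt hzi0 hk
      · exact hcon k i hgt hk hzi0
  · rintro ⟨i, j, hij, hzi, hzj⟩ 
    intro hsurj
    obtain ⟨w, hw⟩ := hsurj (fun _ => 1)
    have h0 : Dmap z w 0 = 0 := by
      rw [Dmap_apply0]
      have hz : ∀ m ∈ (univ : Finset (Fin (n+1))), (∏ l ∈ univ.erase m, z l) * w m = 0 := by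
        intro m _
        rcases eq_or_ne m i with rfl | hmi
        · rw [Finset.prod_eq_zero
            (Finset.mem_erase.mpr ⟨(ne_of_lt hij).symm, mem_univ j⟩) hzj, zero_mul]
        · rw [Finset.prod_eq_zero
            (Finset.mem_erase.mpr ⟨fun hh => hmi hh.symm, mem_univ i⟩) hzi, zero_mul]
      rw [Finset.sum_eq_zero hz]
      simp
    rw [hw] at h0
    norm_num at h0
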